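/- Suppose that for every λ ≥ 0, φ^λ = (w^λ, b^λ) is a λ-regularized upper envelope. Then the biases are eventually bounded: there exist Λ ≥ 0 and M ≥ 0 such that |b^λ| ≤ M for all λ ≥ Λ. -/
import Mathlib


theorem stmt_4
    {W : Type*} [NormedAddCommGroup W] [NormedSpace ℝ W]
    {S : Type*}
    (f : W → S → ℝ)
    (hf_cont : ∀ s : S, Continuous fun w => f w s)
    (hf_zero : ∀ s : S, f 0 s = 0)
    (m : ℕ) (hm : 0 < m)
    (s : Fin m → S) (G : Fin m → ℝ)
    (Gstar : ℝ)
    (hGstar : Gstar = Finset.univ.sup' ⟨⟨0, hm⟩, Finset.mem_univ _⟩ G)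
    (Hstar : ℝ)
    (hHstar : Hstar = ∑ i, (Gstar - G i) ^ 2)
    (φ : ℝ → W × ℝ)
    (hfeas : ∀ lam : ℝ, 0 ≤ lam → ∀ i : Fin m, G i ≤ f (φ lam).1 (s i) + (φ lam).2)
    (hmin : ∀ lam : ℝ, 0 ≤ lam → ∀ ψ : W × ℝ,
      (∀ i : Fin m, G i ≤ f ψ.1 (s i) + ψ.2) →
      (∑ i, (f (φ lam).1 (s i) + (φ lam).2 - G i) ^ 2) + lam * ‖(φ lam).1‖ ^ 2 ≤
        (∑ i, (f ψ.1 (s i) + ψ.2 - G i) ^ 2) + lam * ‖ψ.1‖ ^ 2) :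
    ∃ Λ : ℝ, 0 ≤ Λ ∧ ∃ M : ℝ, 0 ≤ M ∧ ∀ lam : ℝ, Λ ≤ lam → |(φ lam).2| ≤ M := by
  set i0 : Fin m := ⟨0, hm⟩
  have hHnn : 0 ≤ Hstar := by rw [hHstar]; positivity
  -- continuity of the aggregate at 0
  have hg : ContinuousAt (fun w : W => ∑ i, |f w (s i)|) 0 :=
    (continuous_finset_sum _ fun i _ => (hf_cont (s i)).abs).continuousAt
  rw [Metric.continuousAt_iff] at hg
  obtain ⟨δ, hδpos, hδ⟩ := hg 1 one_pos
  refine ⟨max 1 (Hstar / δ ^ 2 + 1), le_trans zero_le_one (le_max_left _ _),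
    Real.sqrt Hstar + 1 + |G i0|, by positivity, fun lam hlam => ?_⟩
  have hlam1 : (1:ℝ) ≤ lam := le_trans (le_max_left _ _) hlam
  have hlam2 : Hstar / δ ^ 2 + 1 ≤ lam := le_trans (le_max_right _ _) hlam
  have hlam0 : (0:ℝ) ≤ lam := zero_le_one.trans hlam1
  -- compare with ψ = (0, Gstar)
  have hkey := hmin lam hlam0 (0, Gstar) (by
    intro i
    simp only [hf_zero, zero_add]
    rw [hGstar]
    exact Finset.le_sup' G (Finset.mem_univ i))
  have hrhs : (∑ i, (f ((0:W), Gstar).1 (s i) + ((0:W), Gstar).2 - G i) ^ 2)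
      + lam * ‖((0:W), Gstar).1‖ ^ 2 = Hstar := by
    simp [hf_zero, hHstar]
  rw [hrhs] at hkey
  have hsum_nn : 0 ≤ ∑ i, (f (φ lam).1 (s i) + (φ lam).2 - G i) ^ 2 := by positivity
  have hlw : 0 ≤ lam * ‖(φ lam).1‖ ^ 2 := by positivity
  -- bound on the norm of weights
  have hHlt : Hstar < lam * δ ^ 2 := by
    have hδ2 : (0:ℝ) < δ ^ 2 := by positivity
    have h1 : Hstar / δ ^ 2 < lam := by linarith
    calc Hstar = Hstar / δ ^ 2 * δ ^ 2 := by field_simp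
      _ < lam * δ ^ 2 := by exact mul_lt_mul_of_pos_right h1 hδ2
  have hwδ : ‖(φ lam).1‖ < δ := by
    by_contra h
    push_neg at h
    have h2 : δ ^ 2 ≤ ‖(φ lam).1‖ ^ 2 := by
      exact pow_le_pow_left₀ hδpos.le h 2
    nlinarith
  have hfsmall : |f (φ lam).1 (s i0)| < 1 := by
    have hd : dist (φ lam).1 (0:W) < δ := by
      rwa [dist_zero_right]
    have hd1 := hδ hd
    rw [Real.dist_eq] at hd1
    simp only [hf_zero, abs_zero, Finset.sum_const_zero, sub_zero] at hd1
    rw [abs_of_nonneg (Finset.sum_nonneg fun i _ => abs_nonneg (f (φ lam).1 (s i)))] at hd1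
    have hmem : |f (φ lam).1 (s i0)| ≤ ∑ i, |f (φ lam).1 (s i)| :=
      Finset.single_le_sum (f := fun i => |f (φ lam).1 (s i)|)
        (fun i _ => abs_nonneg _) (Finset.mem_univ i0)
    linarith
  -- bound on the residual term
  have hterm : (f (φ lam).1 (s i0) + (φ lam).2 - G i0) ^ 2 ≤ Hstar := by
    have h1 : (f (φ lam).1 (s i0) + (φ lam).2 - G i0) ^ 2
        ≤ ∑ i, (f (φ lam).1 (s i) + (φ lam).2 - G i) ^ 2 :=
      Finset.single_le_sum (f := fun i => (f (φ lam).1 (s i) + (φ lam).2 - G i) ^ 2)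
        (fun i _ => sq_nonneg _) (Finset.mem_univ i0)
    linarith
  have hA : |f (φ lam).1 (s i0) + (φ lam).2 - G i0| ≤ Real.sqrt Hstar := by
    rw [← Real.sqrt_sq_eq_abs]
    exact Real.sqrt_le_sqrt hterm
  have h1 := abs_le.mp hA
  have h2 := abs_le.mp hfsmall.le
  have h3 := le_abs_self (G i0)
  have h4 := neg_abs_le (G i0)
  rw [abs_le]
  constructor <;> [linarith; linarith]
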